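/- Let H be a real inner product space, A ⊆ H a nonempty compact set, S ⊆ A a nonempty subset, f : H → ℝ differentiable at x ∈ H with x ∈ conv(S), and δ ∈ (0, 1]. Suppose s ∈ H satisfies ⟨∇f(x), s − x⟩ ≤ δ·inf_{s' ∈ A} ⟨∇f(x), s' − x⟩ and v ∈ S satisfies ⟨∇f(x), x − v⟩ ≤ δ·inf_{v' ∈ S} ⟨∇f(x), x − v'⟩. Then the pairwise gap satisfies ⟨∇f(x), v − s⟩ ≥ δ·g^FW(x), where g^FW(x) := sup_{s' ∈ conv(A)} ⟨∇f(x), x − s'⟩ is the Frank-Wolfe gap. -/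

import Mathlib

open scoped RealInnerProductSpace

private lemma inner_affine_convexOn {H : Type*} [NormedAddCommGroup H] [InnerProductSpace ℝ H]
    (g x : H) : ConvexOn ℝ (Set.univ : Set H) (fun p => ⟪g, x - p⟫) := by
  refine ⟨convex_univ, fun p _ q _ a b ha hb hab => le_of_eq ?_⟩
  simp only [smul_eq_mul, inner_sub_right, inner_add_right, inner_smul_right]
  linear_combination (-(inner ℝ g x : ℝ)) * hab

theorem stmt_5 {H : Type*} [NormedAddCommGroup H] [InnerProductSpace ℝ H]
    (A : Set H) (hA : A.Nonempty) (hAc : IsCompact A)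
    (S : Set H) (hSA : S ⊆ A) (hS : S.Nonempty)
    (f : H → ℝ) (x gradf : H) (hf : HasFDerivAt f ((innerSL ℝ) gradf) x)
    (hx : x ∈ convexHull ℝ S)
    (δ : ℝ) (hδ : δ ∈ Set.Ioc (0 : ℝ) 1) (s : H)
    (hs : ⟪gradf, s - x⟫ ≤ δ * sInf ((fun s' => ⟪gradf, s' - x⟫) '' A))
    (v : H) (hvS : v ∈ S)
    (hv : ⟪gradf, x - v⟫ ≤ δ * sInf ((fun v' => ⟪gradf, x - v'⟫) '' S)) :
    ⟪gradf, v - s⟫ ≥ δ * sSup ((fun s' => ⟪gradf, x - s'⟫) '' (convexHull ℝ A)) := by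
  obtain ⟨hδ0, hδ1⟩ := hδ
  set L : H → ℝ := fun p => ⟪gradf, x - p⟫ with hL
  have hLcont : Continuous L := by
    simp only [hL, inner_sub_right]
    exact continuous_const.sub (continuous_const.inner continuous_id)
  have hLAc : IsCompact (L '' A) := hAc.image hLcont
  have hLAne : (L '' A).Nonempty := hA.image L
  have hbddA : BddAbove (L '' A) := hLAc.bddAbove
  -- sSup over convex hull ≤ sSup over A
  have hconvle : sSup (L '' (convexHull ℝ A)) ≤ sSup (L '' A) := by
    apply csSup_le ((hA.mono (subset_convexHull ℝ A)).image L)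
    rintro y ⟨p, hp, rfl⟩
    obtain ⟨a, haA, hle⟩ := (inner_affine_convexOn gradf x).exists_ge_of_mem_convexHull
      (Set.subset_univ A) hp
    exact le_trans hle (le_csSup hbddA ⟨a, haA, rfl⟩)
  -- relate sInf in hs to sSup of L
  have himg : (fun s' => ⟪gradf, s' - x⟫) '' A = -(L '' A) := by
    ext y
    simp only [Set.mem_neg, Set.mem_image, hL]
    constructor
    · rintro ⟨a, ha, rfl⟩
      exact ⟨a, ha, by rw [show x - a = -(a - x) by abel, inner_neg_right]⟩
    · rintro ⟨a, ha, h⟩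
      exact ⟨a, ha, by rw [show a - x = -(x - a) by abel, inner_neg_right, h, neg_neg]⟩
  have hsInfA : sInf ((fun s' => ⟪gradf, s' - x⟫) '' A) = -sSup (L '' A) := by
    rw [himg, Real.sInf_def, neg_neg]
  -- v has nonnegative away direction: sInf (L '' S) ≤ 0
  have hLx : L x = 0 := by simp [hL]
  have hbddS : BddBelow (L '' S) := (hLAc.bddBelow).mono (Set.image_mono hSA)
  have hinfS_le : sInf ((fun v' => ⟪gradf, x - v'⟫) '' S) ≤ 0 := by
    have hconc : ConvexOn ℝ (Set.univ : Set H) (fun p => ⟪-gradf, x - p⟫) :=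
      inner_affine_convexOn (-gradf) x
    obtain ⟨y, hyS, hle⟩ := hconc.exists_ge_of_mem_convexHull (Set.subset_univ S) hx
    have hy0 : L y ≤ 0 := by
      simp only [inner_neg_left] at hle
      simpa [hL, hLx] using neg_le_neg_iff.mp (by simpa using hle)
    exact le_trans (csInf_le hbddS ⟨y, hyS, rfl⟩) hy0
  have hxv : ⟪gradf, x - v⟫ ≤ 0 :=
    le_trans hv (mul_nonpos_of_nonneg_of_nonpos hδ0.le hinfS_le)
  -- conclude
  have hkey : δ * sSup (L '' (convexHull ℝ A)) ≤ ⟪gradf, x - s⟫ := by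
    have h1 : δ * sSup (L '' (convexHull ℝ A)) ≤ δ * sSup (L '' A) :=
      mul_le_mul_of_nonneg_left hconvle hδ0.le
    have h2 : ⟪gradf, s - x⟫ ≤ δ * (-sSup (L '' A)) := hsInfA ▸ hs
    have h3 : ⟪gradf, x - s⟫ = -⟪gradf, s - x⟫ := by
      rw [show x - s = -(s - x) by abel, inner_neg_right]
    linarith
  have hsplit : ⟪gradf, v - s⟫ = -⟪gradf, x - v⟫ + ⟪gradf, x - s⟫ := by
    rw [← inner_neg_right, ← inner_add_right]
    congr 1
    abel
  rw [ge_iff_le, hsplit]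
  linarith
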